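/- A probabilistic Moore machine $Q$ has probabilistic interference (there exist input sequences $\vec{\imath}_1, \vec{\imath}_2$ with equal low projections but unequal induced distributions on low-output sequences) if and only if in the associated SEM $M_Q$ there exists a fixed low-input sequence $\ell$ of some length $t$ and two high-input sequences $h_1, h_2$ of length $t$ such that the interventional distributions of the low-output vector $\vec{LO}^{1:t}$ under $\mathrm{do}(\vec{HI}^{1:t} := h_1, \vec{LI}^{1:t} := \ell)$ and under $\mathrm{do}(\vec{HI}^{1:t} := h_2, \vec{LI}^{1:t} := \ell)$ differ. -/

import Mathlib

/-- Trace probability of a probabilistic Moore machine. -/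
noncomputable def ptrace {S I O : Type*} [Fintype S] [DecidableEq S] [DecidableEq O]
    (τ : S → I → S → ℝ) (σ : S → O) : S → List I → List O → List S → ℝ
  | s, [], os, ss => if os = [σ s] ∧ ss = [s] then 1 else 0
  | s, i :: is, o :: os, s1 :: ss =>
      if o = σ s ∧ s1 = s then ∑ s' : S, τ s i s' * ptrace τ σ s' is os ss else 0
  | _, _ :: _, _, _ => 0

/-- The machine's marginal probability of a low-output sequence `lo` on the input
sequence `i` (given as a function), from initial state `s0`. -/
noncomputable def machLow {S IH IL OH OL : Type*} [Fintype S] [Fintype OH]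
    [DecidableEq S] [DecidableEq OH] [DecidableEq OL]
    (τ : S → (IH × IL) → S → ℝ) (σ : S → OH × OL) (s0 : S) (k : ℕ)
    (i : Fin k → IH × IL) (lo : Fin (k + 1) → OL) : ℝ :=
  ∑ ho : Fin (k + 1) → OH, ∑ ssf : Fin (k + 1) → S,
    ptrace τ σ s0 (List.ofFn i) (List.ofFn fun j => (ho j, lo j)) (List.ofFn ssf)

/-- Interventional probability in the SEM `M_Q`, by truncated factorization. -/
noncomputable def intervProb {S I O : Type*} [Fintype S] [DecidableEq S] [DecidableEq O]
    (τ : S → I → S → ℝ) (σ : S → O) (s : S) (k : ℕ)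
    (isf : Fin k → I) (osf : Fin (k + 1) → O) (ssf : Fin (k + 1) → S) : ℝ :=
  (if ssf 0 = s then (1 : ℝ) else 0) *
  (if osf 0 = σ (ssf 0) then 1 else 0) *
  ∏ κ : Fin k,
    τ (ssf κ.castSucc) (isf κ) (ssf κ.succ) *
      (if osf κ.succ = σ (ssf κ.succ) then 1 else 0)

/-- Interventional distribution of the low outputs in `M_Q` under
`do(HI⃗ := h, LI⃗ := ℓ)` (the state starts at `s0` by the model's structural
equation). -/
noncomputable def intervLow {S IH IL OH OL : Type*} [Fintype S] [Fintype OH]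
    [DecidableEq S] [DecidableEq OH] [DecidableEq OL]
    (τ : S → (IH × IL) → S → ℝ) (σ : S → OH × OL) (s0 : S) (k : ℕ)
    (h : Fin k → IH) (ℓ : Fin k → IL) (lo : Fin (k + 1) → OL) : ℝ :=
  ∑ ho : Fin (k + 1) → OH, ∑ ssf : Fin (k + 1) → S,
    intervProb τ σ s0 k (fun j => (h j, ℓ j)) (fun j => (ho j, lo j)) ssf

/-- a probabilistic Moore machine `Q` has probabilistic interference
(two input sequences with equal low projections inducing different low-output
distributions) iff in the SEM `M_Q` there are a fixed low-input sequence `ℓ` and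
two high-input sequences `h1, h2` whose interventional low-output distributions
differ. -/
lemma ptrace_eq_intervProb {S I O : Type*} [Fintype S] [DecidableEq S] [DecidableEq O]
    (τ : S → I → S → ℝ) (σ : S → O) :
    ∀ (k : ℕ) (s : S) (isf : Fin k → I) (osf : Fin (k+1) → O) (ssf : Fin (k+1) → S),
      ptrace τ σ s (List.ofFn isf) (List.ofFn osf) (List.ofFn ssf) =
      intervProb τ σ s k isf osf ssf := by
  intro k
  induction k with
  | zero =>
    intro s isf osf ssf
    simp [ptrace, intervProb, List.ofFn_succ]
    by_cases h1 : ssf 0 = s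
    · by_cases h2 : osf 0 = σ s <;> simp [h1, h2]
    · simp [h1]
  | succ k ih =>
    intro s isf osf ssf
    rw [List.ofFn_succ, List.ofFn_succ (f := osf), List.ofFn_succ (f := ssf)]
    show ptrace τ σ s _ _ _ = _
    rw [ptrace]
    have hrec : ∀ s' : S,
        ptrace τ σ s' (List.ofFn fun j => isf j.succ) (List.ofFn fun j => osf j.succ)
          (List.ofFn fun j => ssf j.succ) =
        intervProb τ σ s' k (fun j => isf j.succ) (fun j => osf j.succ)
          (fun j => ssf j.succ) := fun s' => ih s' _ _ _
    simp only [hrec]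
    rw [intervProb]
    unfold intervProb
    rw [Fin.prod_univ_succ]
    have hsum : ∑ s' : S,
        τ s (isf 0) s' *
          ((if ssf (0:Fin k.succ).succ = s' then (1:ℝ) else 0) *
            (if osf (0:Fin k.succ).succ = σ (ssf (0:Fin k.succ).succ) then 1 else 0) *
            ∏ κ : Fin k,
              τ (ssf κ.castSucc.succ) (isf κ.succ) (ssf κ.succ.succ) *
                (if osf κ.succ.succ = σ (ssf κ.succ.succ) then 1 else 0)) =
        τ s (isf 0) (ssf 1) *
          ((if osf 1 = σ (ssf 1) then (1:ℝ) else 0) *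
            ∏ κ : Fin k,
              τ (ssf κ.castSucc.succ) (isf κ.succ) (ssf κ.succ.succ) *
                (if osf κ.succ.succ = σ (ssf κ.succ.succ) then 1 else 0)) := by
      rw [Finset.sum_eq_single (ssf 1)]
      · simp
        split_ifs with h <;> simp [h]
      · intro b _ hb
        have : ssf 1 ≠ b := fun h => hb h.symm
        simp [this, Fin.succ]
      · simp
    beta_reduce
    rw [hsum]
    by_cases h1 : ssf 0 = s
    · by_cases h2 : osf 0 = σ s
      · simp [h1, h2]
        split_ifs with h <;> simp [h]
        try ring
      · have : ¬ (osf 0 = σ (ssf 0)) := by rw [h1]; exact h2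
        simp [h1, h2, this]
    · simp [h1]


lemma machLow_eq_intervLow {S IH IL OH OL : Type*} [Fintype S] [Fintype OH]
    [DecidableEq S] [DecidableEq OH] [DecidableEq OL]
    (τ : S → (IH × IL) → S → ℝ) (σ : S → OH × OL) (s0 : S) (k : ℕ)
    (i : Fin k → IH × IL) (lo : Fin (k + 1) → OL) :
    machLow τ σ s0 k i lo =
      intervLow τ σ s0 k (fun j => (i j).1) (fun j => (i j).2) lo := by
  unfold machLow intervLow
  refine Finset.sum_congr rfl fun ho _ => Finset.sum_congr rfl fun ssf _ => ?_
  rw [ptrace_eq_intervProb]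

theorem interference_iff_effect
    {S IH IL OH OL : Type*} [Fintype S] [Fintype OH]
    [DecidableEq S] [DecidableEq OH] [DecidableEq OL]
    (τ : S → (IH × IL) → S → ℝ) (σ : S → OH × OL) (s0 : S)
    (hτ0 : ∀ s i s', 0 ≤ τ s i s') (hτ1 : ∀ s i, ∑ s', τ s i s' = 1) :
    (∃ (k : ℕ) (i1 i2 : Fin k → IH × IL),
        (∀ j, (i1 j).2 = (i2 j).2) ∧
        ∃ lo : Fin (k + 1) → OL,
          machLow τ σ s0 k i1 lo ≠ machLow τ σ s0 k i2 lo) ↔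
    (∃ (k : ℕ) (ℓ : Fin k → IL) (h1 h2 : Fin k → IH),
        ∃ lo : Fin (k + 1) → OL,
          intervLow τ σ s0 k h1 ℓ lo ≠ intervLow τ σ s0 k h2 ℓ lo) := by
  constructor
  · rintro ⟨k, i1, i2, hlow, lo, hne⟩
    refine ⟨k, fun j => (i1 j).2, fun j => (i1 j).1, fun j => (i2 j).1, lo, ?_⟩
    have e1 : intervLow τ σ s0 k (fun j => (i1 j).1) (fun j => (i1 j).2) lo =
        machLow τ σ s0 k i1 lo := (machLow_eq_intervLow τ σ s0 k i1 lo).symm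
    have e2 : intervLow τ σ s0 k (fun j => (i2 j).1) (fun j => (i1 j).2) lo =
        machLow τ σ s0 k i2 lo := by
      have : (fun j => (i1 j).2) = fun j => (i2 j).2 := funext hlow
      rw [this]
      exact (machLow_eq_intervLow τ σ s0 k i2 lo).symm
    rw [e1, e2]
    exact hne
  · rintro ⟨k, ℓ, h1, h2, lo, hne⟩
    refine ⟨k, fun j => (h1 j, ℓ j), fun j => (h2 j, ℓ j), fun j => rfl, lo, ?_⟩
    rw [machLow_eq_intervLow, machLow_eq_intervLow]
    exact hne
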